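/- Let $K$ be a complete metric space, $X$ a Banach space, and $A$ a closed subspace of $C_b(K : X)$. If the set of strong peak functions in $A$ is dense in $A$, then the set of strong peak points $\rho A$ is a norming subset of $A$, i.e., $\|f\| = \sup\{\|f(t)\| : t \in \rho A\}$ for every $f \in A$. -/

import Mathlib

open Filter

/-- `f` is a strong peak function at `t`. -/
def StrongPeakAt {K X : Type*} [MetricSpace K] [NormedAddCommGroup X]
    (f : BoundedContinuousFunction K X) (t : K) : Prop :=
  f ≠ 0 ∧ ∀ u : ℕ → K,
    Tendsto (fun n => ‖f (u n)‖) atTop (nhds ‖f‖) → Tendsto u atTop (nhds t)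

lemma strongPeakAt_norm_eq {K X : Type*} [MetricSpace K] [NormedAddCommGroup X]
    (g : BoundedContinuousFunction K X) (t : K) (h : StrongPeakAt g t) :
    ‖g t‖ = ‖g‖ := by
  obtain ⟨hg0, hpeak⟩ := h
  have hne : Nonempty K := ⟨t⟩
  -- choose a sequence almost attaining the sup norm
  have hex : ∀ n : ℕ, ∃ x : K, ‖g‖ - 1 / (n + 1) < ‖g x‖ := by
    intro n
    have hlt : ‖g‖ - 1 / (n + 1) < ⨆ x, ‖g x‖ := by
      rw [← BoundedContinuousFunction.norm_eq_iSup_norm]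
      have : (0 : ℝ) < 1 / (n + 1) := by positivity
      linarith
    exact exists_lt_of_lt_ciSup hlt
  choose u hu using hex
  have htend : Tendsto (fun n => ‖g (u n)‖) atTop (nhds ‖g‖) := by
    have hlo : Tendsto (fun n : ℕ => ‖g‖ - 1 / (n + 1)) atTop (nhds ‖g‖) := by
      have := tendsto_one_div_add_atTop_nhds_zero_nat (𝕜 := ℝ)
      have := (tendsto_const_nhds : Tendsto (fun _ : ℕ => ‖g‖) atTop (nhds ‖g‖)).sub this
      simpa using this
    refine tendsto_of_tendsto_of_tendsto_of_le_of_le hlo tendsto_const_nhds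
      (fun n => le_of_lt (hu n)) (fun n => g.norm_coe_le_norm (u n))
  have hut : Tendsto u atTop (nhds t) := hpeak u htend
  have hct : Tendsto (fun n => ‖g (u n)‖) atTop (nhds ‖g t‖) :=
    ((continuous_norm.comp g.continuous).continuousAt.tendsto.comp hut)
  exact tendsto_nhds_unique hct htend

/-- if the strong peak functions are dense in a closed subspace
`A` of `C_b(K : X)`, then the set `ρA` of strong peak points is norming for `A`. -/
theorem stmt_5 {K X : Type*} [MetricSpace K] [CompleteSpace K]
    [NormedAddCommGroup X] [NormedSpace ℝ X] [CompleteSpace X]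
    (A : Submodule ℝ (BoundedContinuousFunction K X))
    (hA : IsClosed (A : Set (BoundedContinuousFunction K X)))
    (hdense : ∀ f ∈ A, ∀ ε > (0 : ℝ), ∃ g ∈ A, (∃ t : K, StrongPeakAt g t) ∧ ‖f - g‖ < ε) :
    ∀ f ∈ A, ‖f‖ = sSup {r : ℝ | ∃ t : K,
      (∃ g ∈ A, StrongPeakAt g t ∧ ‖g t‖ = ‖g‖) ∧ r = ‖f t‖} := by
  intro f hf
  set S : Set ℝ := {r : ℝ | ∃ t : K,
      (∃ g ∈ A, StrongPeakAt g t ∧ ‖g t‖ = ‖g‖) ∧ r = ‖f t‖} with hS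
  have hbdd : BddAbove S := by
    refine ⟨‖f‖, ?_⟩
    rintro r ⟨t, _, rfl⟩
    exact f.norm_coe_le_norm t
  have hle : sSup S ≤ ‖f‖ := by
    refine Real.sSup_le ?_ (norm_nonneg f)
    rintro r ⟨t, _, rfl⟩
    exact f.norm_coe_le_norm t
  have hge : ‖f‖ ≤ sSup S := by
    refine le_of_forall_pos_le_add ?_
    intro ε hε
    obtain ⟨g, hgA, ⟨t, hpeak⟩, hfg⟩ := hdense f hf (ε / 2) (by positivity)
    have hgt : ‖g t‖ = ‖g‖ := strongPeakAt_norm_eq g t hpeak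
    have hmem : ‖f t‖ ∈ S := ⟨t, ⟨g, hgA, hpeak, hgt⟩, rfl⟩
    have h1 : ‖f t - g t‖ ≤ ‖f - g‖ := by
      simpa using (f - g).norm_coe_le_norm t
    have h2 : ‖g‖ ≥ ‖f‖ - ε / 2 := by
      have := norm_sub_norm_le f g
      linarith
    have h3 : ‖f t‖ ≥ ‖g t‖ - ‖f t - g t‖ := by
      have := norm_sub_norm_le (g t) (f t)
      have h4 : ‖g t - f t‖ = ‖f t - g t‖ := norm_sub_rev _ _
      linarith
    have h5 : ‖f t‖ ≥ ‖f‖ - ε := by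
      rw [hgt] at h3
      linarith
    have := le_csSup hbdd hmem
    linarith
  linarith
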